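/- For every k, m, n ∈ ℕ and every fixed q ∈ C_c^∞(ℝ) with support contained in [3/4, 4/3], there is a constant C > 0, depending only on k, m, n and q, such that for every nonzero real number a, setting ν = ia and g(ξ) = q(ξ)·(ξ^{ν+1} − 1) for ξ > 0 (and g = 0 for ξ ≤ 0), one has ‖V̂^k X̂^m Û^n g‖_{L²(ℝ)} ≤ C·(1 + |a|)^{k+m+n}, where L²(ℝ) is with respect to Lebesgue measure. -/

import Mathlib

open Complex Finset MeasureTheory

/-- The operator `V̂ f (ξ) = -i ξ f(ξ)`. -/
noncomputable def hatV (f : ℝ → ℂ) : ℝ → ℂ := fun ξ => -Complex.I * (ξ : ℂ) * f ξ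

/-- The operator `X̂ f (ξ) = (ν−1) f(ξ) − 2ξ f′(ξ)`. -/
noncomputable def hatX (ν : ℂ) (f : ℝ → ℂ) : ℝ → ℂ :=
  fun ξ => (ν - 1) * f ξ - 2 * (ξ : ℂ) * deriv f ξ

/-- The operator `Û f (ξ) = i((ν−1)·f′(ξ) − ξ·f″(ξ))`. -/
noncomputable def hatU (ν : ℂ) (f : ℝ → ℂ) : ℝ → ℂ :=
  fun ξ => Complex.I * ((ν - 1) * deriv f ξ - (ξ : ℂ) * deriv (deriv f) ξ)

/-- The `L²(J, dξ)` norm (Lebesgue measure), valued in `ℝ≥0∞`. -/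
noncomputable def L2 (h : ℝ → ℂ) (J : Set ℝ) : ENNReal :=
  (∫⁻ ξ in J, ENNReal.ofReal (‖h ξ‖ ^ 2)) ^ (1 / 2 : ℝ)

/-- The function `g(ξ) = q(ξ)·(ξ^{ν+1} − 1)` for `ξ > 0` (and `0` for `ξ ≤ 0`),
where `ν = ia`. -/
noncomputable def gfun (q : ℝ → ℂ) (a : ℝ) : ℝ → ℂ :=
  fun ξ => if 0 < ξ then q ξ * ((ξ : ℂ) ^ (Complex.I * a + 1) - 1) else 0

open Function Topology

noncomputable section

abbrev SS : Set ℝ := Set.Icc (3/4 : ℝ) (4/3)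

lemma support_deriv_SS {w : ℝ → ℂ} (hs : Function.support w ⊆ SS) :
    Function.support (deriv w) ⊆ SS :=
  support_deriv_subset.trans (closure_minimal hs isClosed_Icc)

lemma support_itd_SS {w : ℝ → ℂ} (hs : Function.support w ⊆ SS) (j : ℕ) :
    Function.support (iteratedDeriv j w) ⊆ SS := by
  induction j with
  | zero => simpa using hs
  | succ j ih => rw [iteratedDeriv_succ]; exact support_deriv_SS ih

lemma norm_xmul_le {w : ℝ → ℂ} (hs : Function.support w ⊆ SS) (ξ : ℝ) :
    ‖(ξ:ℂ) * w ξ‖ ≤ (4/3) * ‖w ξ‖ := by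
  by_cases h : w ξ = 0
  · simp [h]
  · have hξ : ξ ∈ SS := hs (by simpa [Function.mem_support] using h)
    rw [norm_mul, Complex.norm_real]
    have h1 : |ξ| ≤ 4/3 := by
      rw [_root_.abs_of_nonneg (le_trans (by norm_num) hξ.1)]; exact hξ.2
    exact mul_le_mul_of_nonneg_right (by simpa using h1) (norm_nonneg _)

def SY (p : ℕ) (u : ℝ → ℝ → ℂ) : Prop :=
  (∀ a : ℝ, a ≠ 0 → ContDiff ℝ (⊤ : ℕ∞) (u a) ∧ Function.support (u a) ⊆ SS) ∧
  ∀ j : ℕ, ∃ C : ℝ, 0 ≤ C ∧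
    ∀ a : ℝ, a ≠ 0 → ∀ ξ : ℝ, ‖iteratedDeriv j (u a) ξ‖ ≤ C * (1+|a|)^p

lemma one_le_1abs (a : ℝ) : (1:ℝ) ≤ 1 + |a| := le_add_of_nonneg_right (abs_nonneg a)

lemma pow_1abs_pos (a : ℝ) (p : ℕ) : 0 < (1+|a|)^p :=
  pow_pos (lt_of_lt_of_le one_pos (one_le_1abs a)) p

lemma sym_mono {p : ℕ} {u : ℝ → ℝ → ℂ} (h : SY p u) : SY (p+1) u := by
  refine ⟨h.1, fun j => ?_⟩
  obtain ⟨C, hC0, hC⟩ := h.2 j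
  refine ⟨C, hC0, fun a ha ξ => (hC a ha ξ).trans ?_⟩
  exact mul_le_mul_of_nonneg_left (pow_le_pow_right₀ (one_le_1abs a) (Nat.le_succ p)) hC0

lemma sym_const {p : ℕ} {w : ℝ → ℂ} (hw : ContDiff ℝ (⊤ : ℕ∞) w)
    (hs : Function.support w ⊆ SS) : SY p (fun _ => w) := by
  refine ⟨fun a _ => ⟨hw, hs⟩, fun j => ?_⟩
  have hcs : HasCompactSupport (iteratedDeriv j w) := by
    apply HasCompactSupport.of_support_subset_isCompact (isCompact_Icc (a := (3/4:ℝ)) (b := 4/3))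
    exact support_itd_SS hs j
  obtain ⟨C, hC⟩ := hcs.exists_bound_of_continuous (hw.continuous_iteratedDeriv j (by exact_mod_cast le_top))
  refine ⟨C, le_trans (norm_nonneg _) (hC 0), fun a ha ξ => ?_⟩
  calc ‖iteratedDeriv j w ξ‖ ≤ C := hC ξ
  _ ≤ C * (1+|a|)^p := le_mul_of_one_le_right (le_trans (norm_nonneg _) (hC 0))
      (one_le_pow₀ (one_le_1abs a))

lemma itd_add {f g : ℝ → ℂ} (hf : ContDiff ℝ (⊤ : ℕ∞) f) (hg : ContDiff ℝ (⊤ : ℕ∞) g)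
    (j : ℕ) (ξ : ℝ) :
    iteratedDeriv j (fun x => f x + g x) ξ = iteratedDeriv j f ξ + iteratedDeriv j g ξ := by
  have := iteratedDerivWithin_add (Set.mem_univ ξ) uniqueDiffOn_univ
    ((hf.of_le (by exact_mod_cast le_top)).contDiffWithinAt (s := Set.univ)) ((hg.of_le (by exact_mod_cast le_top)).contDiffWithinAt (s := Set.univ))
    (n := j)
  simpa [iteratedDerivWithin_univ, Pi.add_def] using this

lemma itd_cmul {f : ℝ → ℂ} (hf : ContDiff ℝ (⊤ : ℕ∞) f) (c : ℂ) (j : ℕ) (ξ : ℝ) :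
    iteratedDeriv j (fun x => c * f x) ξ = c * iteratedDeriv j f ξ := by
  have := iteratedDerivWithin_const_smul (Set.mem_univ ξ) uniqueDiffOn_univ c
    ((hf.of_le (by exact_mod_cast le_top)).contDiffWithinAt (s := Set.univ)) (n := j)
  simpa [iteratedDerivWithin_univ, Pi.smul_def, smul_eq_mul] using this

lemma sym_add {p : ℕ} {u v : ℝ → ℝ → ℂ} (hu : SY p u) (hv : SY p v) :
    SY p (fun a ξ => u a ξ + v a ξ) := by
  refine ⟨fun a ha => ⟨((hu.1 a ha).1).add ((hv.1 a ha).1), ?_⟩, fun j => ?_⟩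
  · exact (Function.support_add _ _).trans (Set.union_subset (hu.1 a ha).2 (hv.1 a ha).2)
  · obtain ⟨C, hC0, hC⟩ := hu.2 j
    obtain ⟨D, hD0, hD⟩ := hv.2 j
    refine ⟨C + D, by linarith, fun a ha ξ => ?_⟩
    rw [itd_add (hu.1 a ha).1 (hv.1 a ha).1]
    calc ‖iteratedDeriv j (u a) ξ + iteratedDeriv j (v a) ξ‖
        ≤ ‖iteratedDeriv j (u a) ξ‖ + ‖iteratedDeriv j (v a) ξ‖ := norm_add_le _ _
      _ ≤ C * (1+|a|)^p + D * (1+|a|)^p := add_le_add (hC a ha ξ) (hD a ha ξ)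
      _ = (C + D) * (1+|a|)^p := by ring

lemma sym_cmul {p : ℕ} {u : ℝ → ℝ → ℂ} (c : ℂ) (hu : SY p u) :
    SY p (fun a ξ => c * u a ξ) := by
  refine ⟨fun a ha => ⟨contDiff_const.mul (hu.1 a ha).1, ?_⟩, fun j => ?_⟩
  · exact (Function.support_mul_subset_right _ _).trans (hu.1 a ha).2
  · obtain ⟨C, hC0, hC⟩ := hu.2 j
    refine ⟨‖c‖ * C, by positivity, fun a ha ξ => ?_⟩
    rw [itd_cmul (hu.1 a ha).1, norm_mul, mul_assoc]
    exact mul_le_mul_of_nonneg_left (hC a ha ξ) (norm_nonneg c)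

lemma sym_amul {p : ℕ} {u : ℝ → ℝ → ℂ} (hu : SY p u) :
    SY (p+1) (fun a ξ => (Complex.I * a) * u a ξ) := by
  refine ⟨fun a ha => ⟨contDiff_const.mul (hu.1 a ha).1, ?_⟩, fun j => ?_⟩
  · exact (Function.support_mul_subset_right _ _).trans (hu.1 a ha).2
  · obtain ⟨C, hC0, hC⟩ := hu.2 j
    refine ⟨C, hC0, fun a ha ξ => ?_⟩
    rw [itd_cmul (hu.1 a ha).1, norm_mul]
    have h1 : ‖Complex.I * (a:ℂ)‖ ≤ 1 + |a| := by
      rw [norm_mul, Complex.norm_I, one_mul, Complex.norm_real, Real.norm_eq_abs]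
      linarith
    calc ‖Complex.I * (a:ℂ)‖ * ‖iteratedDeriv j (u a) ξ‖
        ≤ (1+|a|) * (C * (1+|a|)^p) := by
          apply mul_le_mul h1 (hC a ha ξ) (norm_nonneg _) (by positivity)
      _ = C * (1+|a|)^(p+1) := by ring

lemma sym_deriv {p : ℕ} {u : ℝ → ℝ → ℂ} (hu : SY p u) :
    SY p (fun a => deriv (u a)) := by
  refine ⟨fun a ha => ⟨(contDiff_infty_iff_deriv.mp (hu.1 a ha).1).2, support_deriv_SS (hu.1 a ha).2⟩,
    fun j => ?_⟩
  obtain ⟨C, hC0, hC⟩ := hu.2 (j+1)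
  refine ⟨C, hC0, fun a ha ξ => ?_⟩
  rw [← iteratedDeriv_succ']
  exact hC a ha ξ

lemma itd_xmul {f : ℝ → ℂ} (hf : ContDiff ℝ (⊤ : ℕ∞) f) (j : ℕ) (ξ : ℝ) :
    iteratedDeriv j (fun x : ℝ => (x:ℂ) * f x) ξ =
      (ξ:ℂ) * iteratedDeriv j f ξ + (j:ℂ) * iteratedDeriv (j-1) f ξ := by
  induction j generalizing ξ with
  | zero => simp
  | succ j ih =>
    have hdf : ∀ m : ℕ, ContDiff ℝ (⊤ : ℕ∞) (iteratedDeriv m f) := by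
      intro m
      rw [iteratedDeriv_eq_iterate]
      exact hf.iterate_deriv m
    have hder : ∀ (m : ℕ) (x : ℝ),
        HasDerivAt (fun y : ℝ => (y:ℂ) * iteratedDeriv m f y)
          (iteratedDeriv m f x + (x:ℂ) * iteratedDeriv (m+1) f x) x := by
      intro m x
      have h1 : HasDerivAt (fun y : ℝ => (y:ℂ)) 1 x := by
        simpa using (hasDerivAt_id x).ofReal_comp
      have h2 : HasDerivAt (iteratedDeriv m f) (iteratedDeriv (m+1) f x) x := by
        rw [iteratedDeriv_succ]
        exact ((hdf m).differentiable (by simp)).differentiableAt.hasDerivAt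
      have h12 : HasDerivAt (fun y : ℝ => (y:ℂ) * iteratedDeriv m f y)
          (1 * iteratedDeriv m f x + (x:ℂ) * iteratedDeriv (m+1) f x) x := h1.mul h2
      simpa using h12
    rw [iteratedDeriv_succ]
    have hcong : deriv (iteratedDeriv j (fun x : ℝ => (x:ℂ) * f x)) ξ =
        deriv (fun x : ℝ => (x:ℂ) * iteratedDeriv j f x + (j:ℂ) * iteratedDeriv (j-1) f x) ξ := by
      apply Filter.EventuallyEq.deriv_eq
      exact Filter.Eventually.of_forall (fun x => ih x)
    rw [hcong]
    have h3 : HasDerivAt (fun x : ℝ => (x:ℂ) * iteratedDeriv j f x + (j:ℂ) * iteratedDeriv (j-1) f x)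
        ((iteratedDeriv j f ξ + (ξ:ℂ) * iteratedDeriv (j+1) f ξ) +
          (j:ℂ) * iteratedDeriv (j-1+1) f ξ) ξ := by
      refine (hder j ξ).add ?_
      have h4 : HasDerivAt (iteratedDeriv (j-1) f) (iteratedDeriv (j-1+1) f ξ) ξ := by
        rw [iteratedDeriv_succ]
        exact ((hdf (j-1)).differentiable (by simp)).differentiableAt.hasDerivAt
      exact h4.const_mul _
    rw [h3.deriv]
    cases j with
    | zero => simp; ring
    | succ i =>
      simp only [Nat.add_sub_cancel, Nat.succ_sub_one]
      push_cast
      ring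

lemma sym_xmul {p : ℕ} {u : ℝ → ℝ → ℂ} (hu : SY p u) :
    SY p (fun a ξ => (ξ:ℂ) * u a ξ) := by
  have hsm : ∀ a : ℝ, a ≠ 0 → ContDiff ℝ (⊤ : ℕ∞) (fun ξ : ℝ => (ξ:ℂ) * u a ξ) :=
    fun a ha => (Complex.ofRealCLM.contDiff).mul (hu.1 a ha).1
  refine ⟨fun a ha => ⟨hsm a ha, ?_⟩, fun j => ?_⟩
  · exact (Function.support_mul_subset_right _ _).trans (hu.1 a ha).2
  · obtain ⟨C, hC0, hC⟩ := hu.2 j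
    obtain ⟨D, hD0, hD⟩ := hu.2 (j-1)
    refine ⟨(4/3) * C + j * D, by positivity, fun a ha ξ => ?_⟩
    rw [itd_xmul (hu.1 a ha).1]
    calc ‖(ξ:ℂ) * iteratedDeriv j (u a) ξ + (j:ℂ) * iteratedDeriv (j-1) (u a) ξ‖
        ≤ ‖(ξ:ℂ) * iteratedDeriv j (u a) ξ‖ + ‖(j:ℂ) * iteratedDeriv (j-1) (u a) ξ‖ :=
          norm_add_le _ _
      _ ≤ (4/3) * ‖iteratedDeriv j (u a) ξ‖ + j * ‖iteratedDeriv (j-1) (u a) ξ‖ := by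
          gcongr
          · exact norm_xmul_le (support_itd_SS (hu.1 a ha).2 j) ξ
          · rw [norm_mul]; gcongr; simp
      _ ≤ (4/3) * (C * (1+|a|)^p) + j * (D * (1+|a|)^p) := by
          gcongr
          · exact hC a ha ξ
          · exact hD a ha ξ
      _ = ((4/3) * C + j * D) * (1+|a|)^p := by ring


def rep (u v : ℝ → ℂ) (a : ℝ) : ℝ → ℂ :=
  fun ξ => if 0 < ξ then u ξ * (ξ:ℂ)^(Complex.I * a) + v ξ else 0

lemma rep_eq_zero_of_lt {u v : ℝ → ℂ} (hu : Function.support u ⊆ SS)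
    (hv : Function.support v ⊆ SS) (a : ℝ) {ξ : ℝ} (hξ : ξ < 3/4) : rep u v a ξ = 0 := by
  unfold rep
  split_ifs with h
  · have h1 : ξ ∉ SS := fun hm => absurd hm.1 (not_le.mpr hξ)
    have hu0 : u ξ = 0 := by by_contra h'; exact h1 (hu h')
    have hv0 : v ξ = 0 := by by_contra h'; exact h1 (hv h')
    simp [hu0, hv0]
  · rfl

lemma deriv_rep_zero {u v : ℝ → ℂ} (hu : Function.support u ⊆ SS)
    (hv : Function.support v ⊆ SS) (a : ℝ) {ξ : ℝ} (hξ : ξ < 3/4) :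
    deriv (rep u v a) ξ = 0 := by
  have he : rep u v a =ᶠ[𝓝 ξ] (fun _ => (0:ℂ)) := by
    filter_upwards [Iio_mem_nhds hξ] with x hx using rep_eq_zero_of_lt hu hv a hx
  rw [he.deriv_eq, deriv_const]

lemma deriv2_rep_zero {u v : ℝ → ℂ} (hu : Function.support u ⊆ SS)
    (hv : Function.support v ⊆ SS) (a : ℝ) {ξ : ℝ} (hξ : ξ < 3/4) :
    deriv (deriv (rep u v a)) ξ = 0 := by
  have he : deriv (rep u v a) =ᶠ[𝓝 ξ] (fun _ => (0:ℂ)) := by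
    filter_upwards [Iio_mem_nhds hξ] with x hx using deriv_rep_zero hu hv a hx
  rw [he.deriv_eq, deriv_const]

lemma hasDerivAt_cpow_Ia {a : ℝ} (ha : a ≠ 0) {ξ : ℝ} (hξ : 0 < ξ) :
    HasDerivAt (fun y : ℝ => (y:ℂ)^(Complex.I * a))
      ((Complex.I * a) * (ξ:ℂ)^(Complex.I * a) * (ξ:ℂ)⁻¹) ξ := by
  have hIa : (Complex.I * (a:ℂ)) ≠ 0 :=
    mul_ne_zero Complex.I_ne_zero (Complex.ofReal_ne_zero.mpr ha)
  have h1 : (Complex.I * (a:ℂ) - 1) ≠ -1 := by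
    intro h
    apply hIa
    have := congrArg (· + 1) h
    simpa using this
  have h2 := hasDerivAt_ofReal_cpow_const' (ne_of_gt hξ) h1
  rw [sub_add_cancel] at h2
  have h3 := h2.const_mul (Complex.I * (a:ℂ))
  have hfe : (fun y : ℝ => (Complex.I * (a:ℂ)) * ((y:ℂ)^(Complex.I * (a:ℂ)) / (Complex.I * (a:ℂ))))
      = fun y : ℝ => (y:ℂ)^(Complex.I * (a:ℂ)) := by
    funext y; rw [mul_div_assoc', mul_div_cancel_left₀ _ hIa]
  rw [hfe] at h3
  have hval : (Complex.I * a) * (ξ:ℂ)^(Complex.I * a) * (ξ:ℂ)⁻¹ =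
      (Complex.I * (a:ℂ)) * (ξ:ℂ)^(Complex.I * (a:ℂ) - 1) := by
    rw [Complex.cpow_sub _ _ (Complex.ofReal_ne_zero.mpr (ne_of_gt hξ)), Complex.cpow_one]
    ring
  rw [hval]; exact h3

lemma hasDerivAt_rep {u v : ℝ → ℂ} (hu : ContDiff ℝ (⊤ : ℕ∞) u) (hv : ContDiff ℝ (⊤ : ℕ∞) v)
    {a : ℝ} (ha : a ≠ 0) {ξ : ℝ} (hξ : 0 < ξ) :
    HasDerivAt (rep u v a)
      (deriv u ξ * (ξ:ℂ)^(Complex.I * a) +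
        u ξ * ((Complex.I * a) * (ξ:ℂ)^(Complex.I * a) * (ξ:ℂ)⁻¹) + deriv v ξ) ξ := by
  have he : rep u v a =ᶠ[𝓝 ξ] (fun x : ℝ => u x * (x:ℂ)^(Complex.I * (a:ℂ)) + v x) := by
    filter_upwards [Ioi_mem_nhds hξ] with x hx
    simp only [rep, if_pos (by exact hx : (0:ℝ) < x)]
  have h1 : HasDerivAt u (deriv u ξ) ξ :=
    ((hu.differentiable (by simp)) ξ).hasDerivAt
  have h2 : HasDerivAt v (deriv v ξ) ξ :=
    ((hv.differentiable (by simp)) ξ).hasDerivAt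
  exact ((h1.mul (hasDerivAt_cpow_Ia ha hξ)).add h2).congr_of_eventuallyEq he


def GD (p : ℕ) (F : ℝ → ℝ → ℂ) : Prop :=
  ∃ u v : ℝ → ℝ → ℂ, SY p u ∧ SY p v ∧ ∀ a : ℝ, a ≠ 0 → F a = rep (u a) (v a) a

lemma good_V {p : ℕ} {F : ℝ → ℝ → ℂ} (h : GD p F) : GD (p+1) (fun a => hatV (F a)) := by
  obtain ⟨u, v, hu, hv, hF⟩ := h
  refine ⟨fun a ξ => (-Complex.I) * ((ξ:ℂ) * u a ξ), fun a ξ => (-Complex.I) * ((ξ:ℂ) * v a ξ),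
    sym_mono (sym_cmul _ (sym_xmul hu)), sym_mono (sym_cmul _ (sym_xmul hv)), fun a ha => ?_⟩
  funext ξ
  simp only [hF a ha]
  simp only [hatV, rep]
  split_ifs with hx
  · ring
  · simp

lemma good_X {p : ℕ} {F : ℝ → ℝ → ℂ} (h : GD p F) :
    GD (p+1) (fun a => hatX (Complex.I * a) (F a)) := by
  obtain ⟨u, v, hu, hv, hF⟩ := h
  refine ⟨fun a ξ => (-1:ℂ) * ((Complex.I * a) * u a ξ) +
      ((-1:ℂ) * u a ξ + (-2:ℂ) * ((ξ:ℂ) * deriv (u a) ξ)),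
    fun a ξ => (Complex.I * a) * v a ξ + ((-1:ℂ) * v a ξ + (-2:ℂ) * ((ξ:ℂ) * deriv (v a) ξ)),
    sym_add (sym_cmul _ (sym_amul hu))
      (sym_mono (sym_add (sym_cmul _ hu) (sym_cmul _ (sym_xmul (sym_deriv hu))))),
    sym_add (sym_amul hv)
      (sym_mono (sym_add (sym_cmul _ hv) (sym_cmul _ (sym_xmul (sym_deriv hv))))),
    fun a ha => ?_⟩
  funext ξ
  simp only [hF a ha]
  simp only [hatX]
  rcases lt_or_ge 0 ξ with hx | hx
  · rw [(hasDerivAt_rep (hu.1 a ha).1 (hv.1 a ha).1 ha hx).deriv]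
    simp only [rep, if_pos hx]
    have hξ0 : (ξ:ℂ) ≠ 0 := Complex.ofReal_ne_zero.mpr (ne_of_gt hx)
    field_simp
    ring
  · rw [deriv_rep_zero (hu.1 a ha).2 (hv.1 a ha).2 a (lt_of_le_of_lt hx (by norm_num))]
    simp only [rep, if_neg (not_lt.mpr hx)]
    ring

lemma keyU (z X u du ddu dv ddv c : ℂ) (hz : z ≠ 0) :
    I * ((c - 1) * (du * X + u * (c * X * z⁻¹) + dv) -
      z * (ddu * X + du * (c * X * z⁻¹) +
        (du * (c * X * z⁻¹) + u * (c * (c * X * z⁻¹) * z⁻¹ + c * X * -(z ^ 2)⁻¹)) + ddv)) =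
    (I * (-1 * (c * du) + (-1 * du + -1 * (z * ddu)))) * X +
      I * (c * dv + (-1 * dv + -1 * (z * ddv))) := by
  have h1 : z * z⁻¹ = 1 := mul_inv_cancel₀ hz
  have h2 : z ^ 2 * (z ^ 2)⁻¹ = 1 := mul_inv_cancel₀ (pow_ne_zero 2 hz)
  linear_combination (I * c * X * u * z⁻¹ - 2 * I * c * du * X - I * X * z * ddu -
      I * c ^ 2 * X * u * z⁻¹) * h1 + (I * c * X * u * z) * h2 +
    (-(I * c * X * u * z * (z * z⁻¹ + 1)) + I * X * z * ddu) * h1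

lemma good_U {p : ℕ} {F : ℝ → ℝ → ℂ} (h : GD p F) :
    GD (p+1) (fun a => hatU (Complex.I * a) (F a)) := by
  obtain ⟨u, v, hu, hv, hF⟩ := h
  refine ⟨fun a ξ => Complex.I * ((-1:ℂ) * ((Complex.I * a) * deriv (u a) ξ) +
      ((-1:ℂ) * deriv (u a) ξ + (-1:ℂ) * ((ξ:ℂ) * deriv (deriv (u a)) ξ))),
    fun a ξ => Complex.I * ((Complex.I * a) * deriv (v a) ξ +
      ((-1:ℂ) * deriv (v a) ξ + (-1:ℂ) * ((ξ:ℂ) * deriv (deriv (v a)) ξ))),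
    sym_cmul _ (sym_add (sym_cmul _ (sym_amul (sym_deriv hu)))
      (sym_mono (sym_add (sym_cmul _ (sym_deriv hu))
        (sym_cmul _ (sym_xmul (sym_deriv (sym_deriv hu))))))),
    sym_cmul _ (sym_add (sym_amul (sym_deriv hv))
      (sym_mono (sym_add (sym_cmul _ (sym_deriv hv))
        (sym_cmul _ (sym_xmul (sym_deriv (sym_deriv hv))))))),
    fun a ha => ?_⟩
  have hcu : ContDiff ℝ (⊤ : ℕ∞) (u a) → True := fun _ => trivial
  funext ξ
  simp only [hF a ha]
  simp only [hatU]
  rcases lt_or_ge 0 ξ with hx | hx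
  · -- second derivative computation
    have hude : ContDiff ℝ (⊤ : ℕ∞) (deriv (u a)) :=
      (contDiff_infty_iff_deriv.mp (hu.1 a ha).1).2
    have hvde : ContDiff ℝ (⊤ : ℕ∞) (deriv (v a)) :=
      (contDiff_infty_iff_deriv.mp (hv.1 a ha).1).2
    have he : deriv (rep (u a) (v a) a) =ᶠ[𝓝 ξ]
        (fun x : ℝ => deriv (u a) x * (x:ℂ)^(Complex.I * a) +
          u a x * ((Complex.I * a) * (x:ℂ)^(Complex.I * a) * (x:ℂ)⁻¹) + deriv (v a) x) := by
      filter_upwards [Ioi_mem_nhds hx] with x hx'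
      exact (hasDerivAt_rep (hu.1 a ha).1 (hv.1 a ha).1 ha hx').deriv
    have hξ0 : (ξ:ℂ) ≠ 0 := Complex.ofReal_ne_zero.mpr (ne_of_gt hx)
    have hinv : HasDerivAt (fun x : ℝ => ((x:ℂ))⁻¹) (-(((ξ:ℂ))^2)⁻¹) ξ :=
      (hasDerivAt_inv hξ0).comp_ofReal
    have hX := hasDerivAt_cpow_Ia ha hx
    have h1 : HasDerivAt (u a) (deriv (u a) ξ) ξ :=
      (((hu.1 a ha).1.differentiable (by simp)) ξ).hasDerivAt
    have hdu : HasDerivAt (deriv (u a)) (deriv (deriv (u a)) ξ) ξ :=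
      ((hude.differentiable (by simp)) ξ).hasDerivAt
    have hdv : HasDerivAt (deriv (v a)) (deriv (deriv (v a)) ξ) ξ :=
      ((hvde.differentiable (by simp)) ξ).hasDerivAt
    have hw : HasDerivAt (fun x : ℝ => (Complex.I * a) * (x:ℂ)^(Complex.I * a) * (x:ℂ)⁻¹)
        (((Complex.I * a) * ((Complex.I * a) * (ξ:ℂ)^(Complex.I * a) * (ξ:ℂ)⁻¹)) * (ξ:ℂ)⁻¹ +
          ((Complex.I * a) * (ξ:ℂ)^(Complex.I * a)) * (-(((ξ:ℂ))^2)⁻¹)) ξ := by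
      have := ((hX.const_mul (Complex.I * (a:ℂ))).mul hinv)
      exact this
    have hbig : HasDerivAt (fun x : ℝ => deriv (u a) x * (x:ℂ)^(Complex.I * a) +
        u a x * ((Complex.I * a) * (x:ℂ)^(Complex.I * a) * (x:ℂ)⁻¹) + deriv (v a) x) _ ξ :=
      ((hdu.mul hX).add (h1.mul hw)).add hdv
    rw [he.deriv_eq, hbig.deriv]
    rw [(hasDerivAt_rep (hu.1 a ha).1 (hv.1 a ha).1 ha hx).deriv]
    simp only [rep, if_pos hx]
    exact keyU (ξ:ℂ) _ _ _ _ _ _ _ hξ0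
  · have hlt : ξ < 3/4 := lt_of_le_of_lt hx (by norm_num)
    rw [deriv_rep_zero (hu.1 a ha).2 (hv.1 a ha).2 a hlt,
      deriv2_rep_zero (hu.1 a ha).2 (hv.1 a ha).2 a hlt]
    simp [rep, if_neg (not_lt.mpr hx)]


lemma good_gfun {q : ℝ → ℂ} (hq : ContDiff ℝ (⊤ : ℕ∞) q)
    (hsupp : Function.support q ⊆ SS) : GD 0 (fun a => gfun q a) := by
  refine ⟨fun _ ξ => q ξ * (ξ:ℂ), fun _ ξ => -(q ξ),
    sym_const (hq.mul Complex.ofRealCLM.contDiff) ?_, sym_const hq.neg ?_, fun a ha => ?_⟩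
  · exact (Function.support_mul_subset_left _ _).trans hsupp
  · rw [Function.support_fun_neg]; exact hsupp
  · funext ξ
    simp only [gfun, rep]
    split_ifs with hx
    · rw [Complex.cpow_add _ _ (Complex.ofReal_ne_zero.mpr (ne_of_gt hx)), Complex.cpow_one]
      ring
    · rfl

lemma good_iter_V {p : ℕ} {F : ℝ → ℝ → ℂ} (h : GD p F) (k : ℕ) :
    GD (p+k) (fun a => hatV^[k] (F a)) := by
  induction k with
  | zero => simpa using h
  | succ k ih =>
    have h2 : (fun a => hatV^[k+1] (F a)) = (fun a => hatV (hatV^[k] (F a))) := by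
      funext a; rw [Function.iterate_succ_apply']
    rw [h2]
    exact good_V ih

lemma good_iter_X {p : ℕ} {F : ℝ → ℝ → ℂ} (h : GD p F) (m : ℕ) :
    GD (p+m) (fun a : ℝ => (hatX (Complex.I * a))^[m] (F a)) := by
  induction m with
  | zero => simpa using h
  | succ m ih =>
    have h2 : (fun a : ℝ => (hatX (Complex.I * a))^[m+1] (F a))
        = (fun a : ℝ => hatX (Complex.I * a) ((hatX (Complex.I * a))^[m] (F a))) := by
      funext a; rw [Function.iterate_succ_apply']
    rw [h2]
    exact good_X ih

lemma good_iter_U {p : ℕ} {F : ℝ → ℝ → ℂ} (h : GD p F) (n : ℕ) :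
    GD (p+n) (fun a : ℝ => (hatU (Complex.I * a))^[n] (F a)) := by
  induction n with
  | zero => simpa using h
  | succ n ih =>
    have h2 : (fun a : ℝ => (hatU (Complex.I * a))^[n+1] (F a))
        = (fun a : ℝ => hatU (Complex.I * a) ((hatU (Complex.I * a))^[n] (F a))) := by
      funext a; rw [Function.iterate_succ_apply']
    rw [h2]
    exact good_U ih

lemma GD_bound {p : ℕ} {F : ℝ → ℝ → ℂ} (h : GD p F) :
    ∃ C : ℝ, 0 < C ∧ ∀ a : ℝ, a ≠ 0 → ∀ ξ : ℝ,
      ‖F a ξ‖ ≤ C * (1+|a|)^p ∧ (ξ ∉ SS → F a ξ = 0) := by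
  obtain ⟨u, v, hu, hv, hF⟩ := h
  obtain ⟨Cu, hCu0, hCu⟩ := hu.2 0
  obtain ⟨Cv, hCv0, hCv⟩ := hv.2 0
  refine ⟨Cu + Cv + 1, by linarith, fun a ha ξ => ?_⟩
  have hXnorm : 0 < ξ → ‖(ξ:ℂ)^(Complex.I * a)‖ = 1 := by
    intro hx
    rw [Complex.norm_cpow_eq_rpow_re_of_pos hx]
    simp
  constructor
  · rw [hF a ha]
    unfold rep
    split_ifs with hx
    · calc ‖u a ξ * (ξ:ℂ)^(Complex.I * a) + v a ξ‖
          ≤ ‖u a ξ‖ * ‖(ξ:ℂ)^(Complex.I * a)‖ + ‖v a ξ‖ := by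
            refine (norm_add_le _ _).trans ?_; rw [norm_mul]
        _ = ‖u a ξ‖ + ‖v a ξ‖ := by rw [hXnorm hx, mul_one]
        _ ≤ Cu * (1+|a|)^p + Cv * (1+|a|)^p := by
            have h1 := hCu a ha ξ
            have h2 := hCv a ha ξ
            rw [iteratedDeriv_zero] at h1 h2
            exact add_le_add h1 h2
        _ ≤ (Cu + Cv + 1) * (1+|a|)^p := by
            have := pow_1abs_pos a p
            nlinarith
    · rw [norm_zero]
      have := pow_1abs_pos a p
      nlinarith
  · intro hξ
    rw [hF a ha]
    unfold rep
    split_ifs with hx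
    · have hu0 : u a ξ = 0 := by
        by_contra h'; exact hξ ((hu.1 a ha).2 h')
      have hv0 : v a ξ = 0 := by
        by_contra h'; exact hξ ((hv.1 a ha).2 h')
      simp [hu0, hv0]
    · rfl

end

/-- Sobolev-type upper bound for `g(ξ) = q(ξ)(ξ^{ν+1} − 1)` with `ν = ia`:
`‖V̂^k X̂^m Û^n g‖_{L²(ℝ)} ≤ C (1+|a|)^{k+m+n}`. -/
theorem g_sobolev_upper_bound (k m n : ℕ) (q : ℝ → ℂ)
    (hq : ContDiff ℝ (⊤ : ℕ∞) q)
    (hsupp : Function.support q ⊆ Set.Icc (3 / 4 : ℝ) (4 / 3)) :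
    ∃ C > 0, ∀ a : ℝ, a ≠ 0 →
      L2 (hatV^[k] ((hatX (Complex.I * a))^[m] ((hatU (Complex.I * a))^[n] (gfun q a))))
          Set.univ ≤
        ENNReal.ofReal (C * (1 + |a|) ^ (k + m + n)) := by
  have h0 : GD 0 (fun a => gfun q a) := good_gfun hq hsupp
  have h3 := good_iter_V (good_iter_X (good_iter_U h0 n) m) k
  rw [show 0 + n + m + k = k + m + n by omega] at h3
  obtain ⟨C, hC0, hC⟩ := GD_bound h3
  refine ⟨C, hC0, fun a ha => ?_⟩
  set h : ℝ → ℂ := hatV^[k] ((hatX (Complex.I * a))^[m] ((hatU (Complex.I * a))^[n] (gfun q a)))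
    with hh
  set B : ℝ := C * (1 + |a|) ^ (k + m + n) with hB
  have hBpos : 0 < B := by positivity
  have hbd := hC a ha
  have hint : (∫⁻ ξ in Set.univ, ENNReal.ofReal (‖h ξ‖ ^ 2)) ≤ ENNReal.ofReal (B^2) := by
    rw [Measure.restrict_univ]
    have hpt : ∀ ξ : ℝ, ENNReal.ofReal (‖h ξ‖ ^ 2) ≤
        SS.indicator (fun _ => ENNReal.ofReal (B^2)) ξ := by
      intro ξ
      by_cases hξ : ξ ∈ SS
      · rw [Set.indicator_of_mem hξ]
        apply ENNReal.ofReal_le_ofReal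
        have := (hbd ξ).1
        nlinarith [norm_nonneg (h ξ)]
      · rw [Set.indicator_of_notMem hξ]
        have hz : h ξ = 0 := (hbd ξ).2 hξ
        simp [hz]
    calc (∫⁻ ξ, ENNReal.ofReal (‖h ξ‖ ^ 2))
        ≤ ∫⁻ ξ, SS.indicator (fun _ => ENNReal.ofReal (B^2)) ξ := lintegral_mono hpt
      _ = ENNReal.ofReal (B^2) * volume SS := by
          rw [lintegral_indicator measurableSet_Icc, setLIntegral_const]
      _ ≤ ENNReal.ofReal (B^2) * 1 := by
          apply mul_le_mul_right
          rw [Real.volume_Icc]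
          exact ENNReal.ofReal_le_one.mpr (by norm_num)
      _ = ENNReal.ofReal (B^2) := mul_one _
  have hfinal : L2 h Set.univ ≤ (ENNReal.ofReal (B^2)) ^ (1/2 : ℝ) := by
    unfold L2
    exact ENNReal.rpow_le_rpow hint (by norm_num)
  refine hfinal.trans (le_of_eq ?_)
  rw [ENNReal.ofReal_rpow_of_nonneg (by positivity) (by norm_num)]
  have hBB : ((B^2 : ℝ) ^ (1/2 : ℝ)) = B := by
    rw [show (B^2 : ℝ) = B ^ (2:ℝ) by rw [← Real.rpow_natCast B 2]; norm_num,
      ← Real.rpow_mul hBpos.le]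
    norm_num
  rw [hBB]
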